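/- Let p be a prime and f : ℤ_p → ℤ_p a continuous function. Then for every x ∈ ℤ_p the family (B^f_n · χ_n(x))_{n≥0} is summable in ℤ_p with sum f(x). Moreover the coefficients are unique: if (c_n)_{n≥0} is any sequence in ℤ_p such that for every x ∈ ℤ_p the family (c_n · χ_n(x))_{n≥0} is summable with sum f(x), then c_n = B^f_n for all n ≥ 0. -/

import Mathlib

/-- The van der Put coefficients of `f : ℤ_p → ℤ_p`:
`B^f_n = f(n)` for `0 ≤ n < p` and `B^f_n = f(n) - f(n mod p^⌊log_p n⌋)` for `n ≥ p`. -/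
noncomputable def vdpB (p : ℕ) [Fact p.Prime] (f : PadicInt p → PadicInt p) (n : ℕ) : PadicInt p :=
  if n < p then f n else f n - f ((n % p ^ Nat.log p n : ℕ))

/-- `χ_n`, the `ℤ_p`-valued indicator function of the ball
`{x : ‖x - n‖ ≤ p^{-(⌊log_p n⌋ + 1)}}`. -/
noncomputable def chi (p : ℕ) [Fact p.Prime] (n : ℕ) (x : PadicInt p) : PadicInt p :=
  if ‖x - (n : PadicInt p)‖ ≤ (p : ℝ) ^ (-((Nat.log p n : ℤ) + 1)) then 1 else 0

open Filter Finset
namespace VdpAux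
variable (p : ℕ) [hp : Fact p.Prime]

lemma chi_zero_or_one (n : ℕ) (x : PadicInt p) : chi p n x = 0 ∨ chi p n x = 1 := by
  unfold chi; split <;> simp

lemma norm_appr_sub (x : PadicInt p) (m : ℕ) :
    ‖x - (x.appr m : PadicInt p)‖ ≤ (p : ℝ) ^ (-(m : ℤ)) := by
  rw [PadicInt.norm_le_pow_iff_mem_span_pow]; exact PadicInt.appr_spec m x

/-- key: chi n x = 1 iff n is the approximation of x to level log n + 1 -/
lemma chi_eq_one_iff (n : ℕ) (x : PadicInt p) :
    chi p n x = 1 ↔ n = x.appr (Nat.log p n + 1) := by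
  have hp1 : 1 < p := hp.out.one_lt
  set K := Nat.log p n + 1 with hK
  have hexp : (-((Nat.log p n : ℤ) + 1)) = -(K : ℤ) := by push_cast [hK]; ring
  have hn : n < p ^ K := Nat.lt_pow_succ_log_self hp1 n
  have ha : x.appr K < p ^ K := PadicInt.appr_lt x K
  have happr := norm_appr_sub p x K
  constructor
  · intro h
    have hcond : ‖x - (n : PadicInt p)‖ ≤ (p : ℝ) ^ (-(K : ℤ)) := by
      by_contra hc
      rw [chi, hexp, if_neg hc] at h
      exact zero_ne_one h
    have hsub : ‖(((x.appr K : ℤ) - (n : ℤ) : ℤ) : PadicInt p)‖ ≤ (p : ℝ) ^ (-(K : ℤ)) := by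
      have : (((x.appr K : ℤ) - (n : ℤ) : ℤ) : PadicInt p)
          = (x - (n : PadicInt p)) - (x - (x.appr K : PadicInt p)) := by push_cast; ring
      rw [this]
      rw [sub_eq_add_neg]
      exact le_trans (PadicInt.nonarchimedean _ _)
        (max_le hcond (by rwa [norm_neg]))
    rw [PadicInt.norm_int_le_pow_iff_dvd] at hsub
    have := Int.eq_zero_of_abs_lt_dvd hsub (by
      have h1 : (n:ℤ) < (p:ℤ)^K := by exact_mod_cast hn
      have h2 : ((x.appr K : ℤ)) < (p:ℤ)^K := by exact_mod_cast ha
      rw [abs_lt]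
      omega)
    omega
  · intro h
    rw [chi, hexp, if_pos]
    rw [h]; exact happr

lemma chi_apply (n : ℕ) (x : PadicInt p) :
    chi p n x = if n = x.appr (Nat.log p n + 1) then 1 else 0 := by
  rcases chi_zero_or_one p n x with h | h
  · rw [h, eq_comm, ite_eq_right_iff]
    intro hc
    exact absurd ((chi_eq_one_iff p n x).mpr hc) (h ▸ zero_ne_one)
  · rw [h, if_pos ((chi_eq_one_iff p n x).mp h)]

lemma chi_self (n : ℕ) : chi p n (n : PadicInt p) = 1 := by
  rw [chi, if_pos]
  rw [sub_self, norm_zero]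
  positivity

lemma chi_nat_le {m N : ℕ} (h : chi p m (N : PadicInt p) ≠ 0) : m ≤ N := by
  have hp1 : 1 < p := hp.out.one_lt
  have h1 : chi p m (N : PadicInt p) = 1 := (chi_zero_or_one p m N).resolve_left h
  set K := Nat.log p m + 1 with hK
  have hm : m < p ^ K := Nat.lt_pow_succ_log_self hp1 m
  have hcond : ‖((N : PadicInt p)) - (m : PadicInt p)‖ ≤ (p : ℝ) ^ (-(K : ℤ)) := by
    by_contra hc
    have hexp : (-((Nat.log p m : ℤ) + 1)) = -(K : ℤ) := by push_cast [hK]; ring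
    rw [chi, hexp, if_neg hc] at h1
    exact zero_ne_one h1
  have hsub : ‖(((N : ℤ) - (m : ℤ) : ℤ) : PadicInt p)‖ ≤ (p : ℝ) ^ (-(K : ℤ)) := by
    have : (((N : ℤ) - (m : ℤ) : ℤ) : PadicInt p) = (N : PadicInt p) - (m : PadicInt p) := by
      push_cast; ring
    rw [this]; exact hcond
  rw [PadicInt.norm_int_le_pow_iff_dvd] at hsub
  by_contra hc
  push_neg at hc
  have := Int.eq_zero_of_abs_lt_dvd hsub (by
    have h1 : (m:ℤ) < (p:ℤ)^K := by exact_mod_cast hm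
    have h2 : (N:ℤ) < (m:ℤ) := by exact_mod_cast hc
    rw [abs_lt]
    omega)
  omega

variable (f : PadicInt p → PadicInt p)

lemma sum_range_pow (x : PadicInt p) (M : ℕ) (hM : 1 ≤ M) :
    ∑ n ∈ Finset.range (p ^ M), vdpB p f n * chi p n x = f (x.appr M) := by
  have hp1 : 1 < p := hp.out.one_lt
  induction M, hM using Nat.le_induction with
  | base =>
    rw [Finset.sum_eq_single (x.appr 1)]
    · have hlt : x.appr 1 < p := by simpa using PadicInt.appr_lt x 1
      have hlog : Nat.log p (x.appr 1) = 0 := Nat.log_eq_zero_iff.mpr (Or.inl hlt)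
      rw [vdpB, if_pos hlt, (chi_eq_one_iff p _ x).mpr (by rw [hlog]), mul_one]
    · intro b hb hne
      have hblt : b < p := by simpa using hb
      have hlog : Nat.log p b = 0 := Nat.log_eq_zero_iff.mpr (Or.inl hblt)
      rw [chi_apply, hlog, if_neg (by simpa using hne), mul_zero]
    · intro hmem
      exact absurd (by simpa using PadicInt.appr_lt x 1) hmem
  | succ M hM IH =>
    have hple : p ^ M ≤ p ^ (M + 1) := Nat.pow_le_pow_right hp.out.pos (by omega)
    rw [Finset.range_eq_Ico, ← Finset.sum_Ico_consecutive _ (Nat.zero_le (p ^ M)) hple,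
      ← Finset.range_eq_Ico, IH]
    have hlogIco : ∀ n ∈ Finset.Ico (p ^ M) (p ^ (M + 1)), Nat.log p n = M := fun n hn =>
      Nat.log_eq_of_pow_le_of_lt_pow (Finset.mem_Ico.mp hn).1 (Finset.mem_Ico.mp hn).2
    set a := x.appr (M + 1) with ha
    set b := x.appr M with hb
    have hba : b ≤ a := PadicInt.appr_mono x (by omega)
    have hdvd : p ^ M ∣ a - b := PadicInt.dvd_appr_sub_appr x M (M + 1) (by omega)
    have hblt : b < p ^ M := PadicInt.appr_lt x M
    have halt : a < p ^ (M + 1) := PadicInt.appr_lt x (M + 1)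
    by_cases hc : a < p ^ M
    · have hab : a = b := by
        have h0 : a - b < p ^ M := by omega
        have := Nat.eq_zero_of_dvd_of_lt hdvd
        rcases Nat.eq_zero_or_pos (a - b) with h | h
        · omega
        · have := Nat.le_of_dvd h hdvd; omega
      have hzero : ∀ n ∈ Finset.Ico (p ^ M) (p ^ (M + 1)), vdpB p f n * chi p n x = 0 := by
        intro n hn
        rw [chi_apply, hlogIco n hn, ← ha, if_neg, mul_zero]
        have := (Finset.mem_Ico.mp hn).1
        omega
      rw [Finset.sum_eq_zero hzero, add_zero, hab]
    · push_neg at hc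
      have hloga : Nat.log p a = M := Nat.log_eq_of_pow_le_of_lt_pow hc halt
      rw [Finset.sum_eq_single a]
      · have hchi : chi p a x = 1 := (chi_eq_one_iff p a x).mpr (by rw [hloga])
        have hpa : ¬ a < p := by
          have : p ^ 1 ≤ p ^ M := Nat.pow_le_pow_right hp.out.pos hM
          push_neg
          calc p = p ^ 1 := (pow_one p).symm
            _ ≤ p ^ M := this
            _ ≤ a := hc
        have hmod : a % p ^ M = b := by
          have h1 : b % p ^ M = b := Nat.mod_eq_of_lt hblt
          have h2 : b % p ^ M = a % p ^ M := (Nat.modEq_iff_dvd' hba).mpr hdvd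
          omega
        rw [vdpB, if_neg hpa, hloga, hmod, hchi, mul_one]
        ring
      · intro n hn hne
        rw [chi_apply, hlogIco n hn, ← ha, if_neg hne, mul_zero]
      · intro hmem
        exact absurd (Finset.mem_Ico.mpr ⟨hc, halt⟩) hmem


lemma tendsto_vdpB (hf : Continuous f) :
    Tendsto (fun n => vdpB p f n) atTop (nhds 0) := by
  have hp1 : 1 < p := hp.out.one_lt
  rw [NormedAddCommGroup.tendsto_nhds_zero]
  intro ε hε
  obtain ⟨δ, hδ, hδε⟩ := Metric.uniformContinuous_iff.mp
    (CompactSpace.uniformContinuous_of_continuous hf) ε hε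
  have hpinv : (p : ℝ)⁻¹ < 1 := by
    rw [inv_lt_one_iff₀]; right; exact_mod_cast hp1
  obtain ⟨j, hj⟩ := exists_pow_lt_of_lt_one hδ hpinv
  filter_upwards [eventually_ge_atTop (max p (p ^ j))] with n hn
  have hnp : p ≤ n := le_trans (le_max_left _ _) hn
  have hpj : p ^ j ≤ n := le_trans (le_max_right _ _) hn
  have hn0 : n ≠ 0 := by omega
  set K := Nat.log p n with hK
  have hjK : j ≤ K := (Nat.le_log_iff_pow_le hp1 hn0).mpr hpj
  have hdist : ‖(n : PadicInt p) - ((n % p ^ K : ℕ) : PadicInt p)‖ ≤ (p : ℝ) ^ (-(K : ℤ)) := by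
    have hcast : (n : PadicInt p) - ((n % p ^ K : ℕ) : PadicInt p)
        = (((n : ℤ) - ((n % p ^ K : ℕ) : ℤ) : ℤ) : PadicInt p) := by
      generalize n % p ^ K = r
      push_cast; ring
    rw [hcast, PadicInt.norm_int_le_pow_iff_dvd]
    have hdd : p ^ K ∣ n - n % p ^ K := Nat.dvd_sub_mod n
    have hle : n % p ^ K ≤ n := Nat.mod_le n _
    have h4 : (n : ℤ) - ((n % p ^ K : ℕ) : ℤ) = (((n - n % p ^ K : ℕ)) : ℤ) := by
      rw [Int.natCast_sub hle]
    rw [h4]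
    exact_mod_cast Int.natCast_dvd_natCast.mpr hdd
  have hbound : (p : ℝ) ^ (-(K : ℤ)) < δ := by
    calc (p : ℝ) ^ (-(K : ℤ)) ≤ (p : ℝ) ^ (-(j : ℤ)) := by
          apply zpow_le_zpow_right₀ (by exact_mod_cast hp1.le)
          omega
      _ = ((p : ℝ)⁻¹) ^ j := by rw [zpow_neg, ← inv_zpow, zpow_natCast]
      _ < δ := hj
  have hfd : dist (f n) (f ((n % p ^ K : ℕ) : PadicInt p)) < ε := by
    apply hδε
    rw [dist_eq_norm]
    exact lt_of_le_of_lt hdist hbound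
  rw [vdpB, if_neg (by omega), ← hK]
  rw [dist_eq_norm] at hfd
  exact hfd

lemma hasSum_vdp (hf : Continuous f) (x : PadicInt p) :
    HasSum (fun n : ℕ => vdpB p f n * chi p n x) (f x) := by
  have hp1 : 1 < p := hp.out.one_lt
  set g := fun n : ℕ => vdpB p f n * chi p n x with hg
  have htz : Tendsto g atTop (nhds 0) := by
    refine squeeze_zero_norm (fun n => ?_)
      (tendsto_zero_iff_norm_tendsto_zero.mp (tendsto_vdpB p f hf))
    calc ‖g n‖ ≤ ‖vdpB p f n‖ * ‖chi p n x‖ := norm_mul_le _ _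
      _ ≤ ‖vdpB p f n‖ * 1 := by
          apply mul_le_mul_of_nonneg_left _ (norm_nonneg _)
          rcases chi_zero_or_one p n x with h | h <;> simp [h]
      _ = ‖vdpB p f n‖ := mul_one _
  have hsummable : Summable g :=
    NonarchimedeanAddGroup.summable_of_tendsto_cofinite_zero
      (by rwa [Nat.cofinite_eq_atTop])
  have hS : HasSum g (∑' n, g n) := hsummable.hasSum
  have h1 : Tendsto (fun M : ℕ => ∑ n ∈ Finset.range (p ^ M), g n) atTop (nhds (∑' n, g n)) :=
    hS.tendsto_sum_nat.comp (tendsto_pow_atTop_atTop_of_one_lt hp1)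
  have happr : Tendsto (fun M : ℕ => ((x.appr M : PadicInt p))) atTop (nhds x) := by
    rw [tendsto_iff_dist_tendsto_zero]
    apply squeeze_zero (fun M => dist_nonneg) (fun M => ?_)
      (g := fun M : ℕ => ((p : ℝ)⁻¹) ^ M)
    · apply tendsto_pow_atTop_nhds_zero_of_lt_one (by positivity)
      rw [inv_lt_one_iff₀]; right; exact_mod_cast hp1
    · rw [dist_eq_norm, ← norm_neg, neg_sub]
      calc ‖x - (x.appr M : PadicInt p)‖ ≤ (p : ℝ) ^ (-(M : ℤ)) := norm_appr_sub p x M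
        _ = ((p : ℝ)⁻¹) ^ M := by rw [zpow_neg, ← inv_zpow, zpow_natCast]
  have h2 : Tendsto (fun M : ℕ => ∑ n ∈ Finset.range (p ^ M), g n) atTop (nhds (f x)) := by
    apply Tendsto.congr' _ ((hf.tendsto x).comp happr)
    filter_upwards [eventually_ge_atTop 1] with M hM
    exact (sum_range_pow p f x M hM).symm
  have : (∑' n, g n) = f x := tendsto_nhds_unique h1 h2
  rwa [this] at hS

lemma finite_sum_eq {c : ℕ → PadicInt p} {N : ℕ} {s : PadicInt p}
    (h : HasSum (fun m : ℕ => c m * chi p m (N : PadicInt p)) s) :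
    s = ∑ m ∈ Finset.range (N + 1), c m * chi p m (N : PadicInt p) := by
  apply h.unique
  apply hasSum_sum_of_ne_finset_zero
  intro m hm
  rcases chi_zero_or_one p m (N : PadicInt p) with hz | ho
  · rw [hz, mul_zero]
  · exfalso
    have := chi_nat_le p (ho ▸ one_ne_zero)
    simp only [Finset.mem_range] at hm
    omega

end VdpAux


theorem vanDerPut_expansion (p : ℕ) [Fact p.Prime]
    (f : PadicInt p → PadicInt p) (hf : Continuous f) :
    (∀ x : PadicInt p, HasSum (fun n : ℕ => vdpB p f n * chi p n x) (f x)) ∧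
    (∀ c : ℕ → PadicInt p,
      (∀ x : PadicInt p, HasSum (fun n : ℕ => c n * chi p n x) (f x)) →
      ∀ n : ℕ, c n = vdpB p f n) := by
  refine ⟨VdpAux.hasSum_vdp p f hf, ?_⟩
  intro c hc n
  induction n using Nat.strong_induction_on with
  | _ N IH =>
    have h1 := VdpAux.finite_sum_eq p (hc N)
    have h2 := VdpAux.finite_sum_eq p (VdpAux.hasSum_vdp p f hf (N : PadicInt p))
    rw [Finset.sum_range_succ] at h1 h2
    rw [VdpAux.chi_self, mul_one] at h1 h2
    have hsum : ∑ m ∈ Finset.range N, c m * chi p m (N : PadicInt p)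
        = ∑ m ∈ Finset.range N, vdpB p f m * chi p m (N : PadicInt p) := by
      apply Finset.sum_congr rfl
      intro m hm
      rw [IH m (Finset.mem_range.mp hm)]
    rw [h2, hsum] at h1
    exact (add_left_cancel h1).symm
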